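/- Let α ∈ [2π/3, 3π/4). Define x : (Fin 3 → Fin 3) → ℝ so that x(L) depends only on the triple (N0,N1,N2) counting how many coordinates of L equal 0, 1, 2 respectively, with values: 3·sin α for (3,0,0) and (0,0,3); sin 3α for (2,0,1) and (1,0,2); −sin 2α for (2,1,0), (1,1,1) and (0,1,2); sin α for (1,2,0) and (0,2,1); and 0 for (0,3,0). Then x has all entries nonnegative, x ≠ 0, and A_α^{⊗3} x = 0. -/

import Mathlib

set_option maxRecDepth 8000
set_option maxHeartbeats 1600000

open Complex Real Finset

/-- The matrix `A_α` with rows `(1, e^{iα}, 0)` and `(0, 1, e^{iα})`. -/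
noncomputable def Amat (α : ℝ) : Matrix (Fin 2) (Fin 3) ℂ :=
  !![1, Complex.exp (α * Complex.I), 0;
     0, 1, Complex.exp (α * Complex.I)]

/-- The number of coordinates of `L` equal to `i`. -/
def cnt {N : ℕ} (L : Fin N → Fin 3) (i : Fin 3) : ℕ :=
  (Finset.univ.filter fun p => L p = i).card

/-- The values of the explicit solution for `N = 3`, as a function of the
counts `(N0, N1, N2)` of digits `0`, `1`, `2`. -/
noncomputable def wval (α : ℝ) : ℕ → ℕ → ℕ → ℝ
  | 3, 0, 0 => 3 * Real.sin α
  | 0, 0, 3 => 3 * Real.sin α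
  | 2, 0, 1 => Real.sin (3 * α)
  | 1, 0, 2 => Real.sin (3 * α)
  | 2, 1, 0 => -Real.sin (2 * α)
  | 1, 1, 1 => -Real.sin (2 * α)
  | 0, 1, 2 => -Real.sin (2 * α)
  | 1, 2, 0 => Real.sin α
  | 0, 2, 1 => Real.sin α
  | _, _, _ => 0

/-- Equivalence between triples and functions `Fin 3 → γ`. -/
def e3aux (γ : Type*) : (γ × γ × γ) ≃ (Fin 3 → γ) where
  toFun t := ![t.1, t.2.1, t.2.2]
  invFun L := (L 0, L 1, L 2)
  left_inv t := rfl
  right_inv L := by funext i; fin_cases i <;> rfl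

theorem sum_pi_fin3 {γ M : Type*} [Fintype γ] [AddCommMonoid M] (f : (Fin 3 → γ) → M) :
    ∑ L, f L = ∑ a, ∑ b, ∑ c, f ![a, b, c] := by
  rw [← Equiv.sum_comp (e3aux γ) f]
  simp [Fintype.sum_prod_type, e3aux]
  rfl

lemma cnt_vec (a b c i : Fin 3) :
    cnt ![a, b, c] i =
      (if a = i then 1 else 0) + ((if b = i then 1 else 0) + (if c = i then 1 else 0)) := by
  revert a b c i; decide

lemma wval_nonneg (α : ℝ) (h1 : 0 ≤ Real.sin α) (h2 : Real.sin (2*α) ≤ 0)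
    (h3 : 0 ≤ Real.sin (3*α)) : ∀ a b c : ℕ, 0 ≤ wval α a b c := by
  intro a b c
  unfold wval
  split <;> linarith

/-- For `α ∈ [2π/3, 3π/4)` the vector `x(L) = wval α (cnt L 0) (cnt L 1) (cnt L 2)`
is a nontrivial nonnegative solution of `A_α^{⊗3} x = 0`. -/
theorem explicit_nns_N3 (α : ℝ) (hα : α ∈ Set.Ico (2 * π / 3) (3 * π / 4)) :
    (∀ L : Fin 3 → Fin 3, 0 ≤ wval α (cnt L 0) (cnt L 1) (cnt L 2)) ∧
    (fun L : Fin 3 → Fin 3 => wval α (cnt L 0) (cnt L 1) (cnt L 2)) ≠ 0 ∧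
    (∀ J : Fin 3 → Fin 2,
      ∑ L : Fin 3 → Fin 3,
        (wval α (cnt L 0) (cnt L 1) (cnt L 2) : ℂ) *
          ∏ p : Fin 3, Amat α (J p) (L p) = 0) := by
  obtain ⟨hl, hr⟩ := hα
  have hπ := Real.pi_pos
  have h1 : 0 < Real.sin α := Real.sin_pos_of_pos_of_lt_pi (by linarith) (by linarith)
  have h2 : Real.sin (2*α) ≤ 0 := by
    have e : Real.sin (2*α) = -Real.sin (2*α - π) := by
      rw [← Real.sin_add_pi (2*α - π)]; ring_nf
    have : 0 ≤ Real.sin (2*α - π) :=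
      Real.sin_nonneg_of_nonneg_of_le_pi (by linarith) (by linarith)
    rw [e]; linarith
  have h3 : 0 ≤ Real.sin (3*α) := by
    have e : Real.sin (3*α) = Real.sin (3*α - 2*π) := by
      rw [← Real.sin_add_two_pi (3*α - 2*π)]; ring_nf
    rw [e]
    exact Real.sin_nonneg_of_nonneg_of_le_pi (by linarith) (by linarith)
  refine ⟨fun L => wval_nonneg α h1.le h2 h3 _ _ _, ?_, ?_⟩
  · intro h
    have h0 := congrFun h (fun _ => 0)
    have hc0 : cnt (fun _ : Fin 3 => (0 : Fin 3)) 0 = 3 := by decide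
    have hc1 : cnt (fun _ : Fin 3 => (0 : Fin 3)) 1 = 0 := by decide
    have hc2 : cnt (fun _ : Fin 3 => (0 : Fin 3)) 2 = 0 := by decide
    rw [hc0, hc1, hc2] at h0
    simp only [wval, Pi.zero_apply] at h0
    linarith
  · intro J
    have hz : Complex.exp (α*Complex.I) ≠ 0 := Complex.exp_ne_zero _
    have hs : ∀ n : ℕ, Complex.sin ((n:ℂ) * α) =
        ((Complex.exp (α*Complex.I) ^ n)⁻¹ - Complex.exp (α*Complex.I) ^ n) * Complex.I / 2 := by
      intro n
      rw [Complex.sin, ← Complex.exp_nat_mul, ← Complex.exp_neg]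
      ring_nf
    have hs1 : Complex.sin (α:ℂ) =
        ((Complex.exp (α*Complex.I))⁻¹ - Complex.exp (α*Complex.I)) * Complex.I / 2 := by
      have := hs 1; simpa using this
    have hs2 := hs 2
    have hs3 := hs 3
    push_cast at hs2 hs3
    have hJ : ∀ p, J p = 0 ∨ J p = 1 := fun p => by omega
    rcases hJ 0 with h0 | h0 <;> rcases hJ 1 with h1 | h1 <;> rcases hJ 2 with h2' | h2' <;>
    · rw [sum_pi_fin3]
      simp only [Fin.sum_univ_three, Fin.prod_univ_three, h0, h1, h2',
        Matrix.cons_val_zero, Matrix.cons_val_one, Matrix.head_cons, cnt_vec]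
      norm_num [wval, Amat, Matrix.cons_val_one, Matrix.head_cons, Fin.ext_iff, Matrix.cons_val_two, Matrix.tail_cons]
      simp only [hs1, hs2, hs3]
      field_simp
      ring_nf
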